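/- Let b ∈ ℝ, let u₀ : ℝ → ℝ be continuously differentiable, and define u(x,t) := u₀( x (6bt + 1)^{−1/3} ) · (6bt + 1)^{−1/3} for x ∈ ℝ and for all t with 6bt + 1 > 0. Then u satisfies the continuity equation ∂_t u + ∂_x( (2bx / (6bt + 1)) · u ) = 0 on this domain, with u(x,0) = u₀(x). -/

import Mathlib

open Real Set

/-- `u(x,t) = u₀(x(6bt+1)^{-1/3})(6bt+1)^{-1/3}` satisfies the continuity equation
`∂ₜu + ∂ₓ((2bx/(6bt+1))u) = 0` wherever `6bt + 1 > 0`, with `u(x,0) = u₀(x)`. -/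
theorem stmt_8 (b : ℝ) (u₀ : ℝ → ℝ) (hu₀ : ContDiff ℝ 1 u₀)
    (u : ℝ → ℝ → ℝ)
    (hu : u = fun x t =>
      u₀ (x * (6 * b * t + 1) ^ (-(1/3) : ℝ)) * (6 * b * t + 1) ^ (-(1/3) : ℝ)) :
    (∀ x t : ℝ, 0 < 6 * b * t + 1 →
      deriv (fun s => u x s) t
        + deriv (fun y => (2 * b * y / (6 * b * t + 1)) * u y t) x = 0) ∧
    (∀ x : ℝ, u x 0 = u₀ x) := by
  subst hu
  have hdiff : Differentiable ℝ u₀ := hu₀.differentiable one_ne_zero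
  constructor
  · intro x t ht
    set p : ℝ := -(1/3) with hp
    set A : ℝ := 6 * b * t + 1 with hA
    have hA0 : A ≠ 0 := ne_of_gt ht
    set c : ℝ := A ^ p with hc
    set c' : ℝ := A ^ (p - 1) with hc'
    have key : c' * A = c := by
      rw [hc', hc, ← Real.rpow_add_one hA0]
      norm_num
    have hc'eq : c' = c / A := by rw [eq_div_iff hA0]; exact key
    set d : ℝ := deriv u₀ (x * c) with hd
    -- derivative in t
    have h1 : HasDerivAt (fun s : ℝ => 6 * b * s + 1) (6 * b) t := by
      simpa using ((hasDerivAt_id t).const_mul (6 * b)).add_const 1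
    have h2 : HasDerivAt (fun s : ℝ => (6 * b * s + 1) ^ p) (p * c' * (6 * b)) t := by
      have := (Real.hasDerivAt_rpow_const (p := p) (Or.inl hA0)).comp t h1
      simpa [hc', mul_comm, mul_assoc, Function.comp_def] using this
    have h3 : HasDerivAt u₀ d (x * c) := (hdiff (x * c)).hasDerivAt
    have h4 : HasDerivAt (fun s : ℝ => x * (6 * b * s + 1) ^ p)
        (x * (p * c' * (6 * b))) t := h2.const_mul x
    have h5 : HasDerivAt (fun s : ℝ => u₀ (x * (6 * b * s + 1) ^ p))
        (d * (x * (p * c' * (6 * b)))) t := by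
      have := h3.comp t h4
      simpa [hc, Function.comp_def] using this
    have hT : HasDerivAt (fun s : ℝ =>
        u₀ (x * (6 * b * s + 1) ^ p) * (6 * b * s + 1) ^ p)
        (d * (x * (p * c' * (6 * b))) * c + u₀ (x * c) * (p * c' * (6 * b))) t := by
      have := h5.mul h2
      simpa [hc, hA, Pi.mul_def] using this
    -- derivative in x
    have g1 : HasDerivAt (fun y : ℝ => 2 * b * y / A) (2 * b / A) x := by
      simpa using ((hasDerivAt_id x).const_mul (2 * b)).div_const A
    have g2 : HasDerivAt (fun y : ℝ => y * c) c x := by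
      simpa using (hasDerivAt_id x).mul_const c
    have g3 : HasDerivAt (fun y : ℝ => u₀ (y * c) * c) (d * c * c) x := by
      have := ((h3.comp x g2).mul_const c)
      simpa [mul_assoc] using this
    have gX : HasDerivAt (fun y : ℝ => (2 * b * y / A) * (u₀ (y * c) * c))
        (2 * b / A * (u₀ (x * c) * c) + 2 * b * x / A * (d * c * c)) x := g1.mul g3
    rw [hT.deriv, gX.deriv]
    rw [hc'eq]
    field_simp
    ring
  · intro x
    norm_num
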